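/- arXiv:1504.06231 — 3 statements merged into one kernel-verified Lean document; each statement's English description precedes it below -/
import Mathlib

section
/- For μ > 0, Δ > 0, n ≥ 1, and p = e^{-μΔ}, the normalized expected number of D2D repairs per time unit, (1/Δ)·Σ_{i=r}^{n}(n-i)·C(n,i)p^i(1-p)^{n-i}, tends to n·μ as Δ → 0⁺, for any fixed r with 0 ≤ r ≤ n-1. -/
open Finset Filter Topology

lemma slope_lim (μ : ℝ) :
    Tendsto (fun Δ : ℝ => (1 - Real.exp (-μ * Δ)) / Δ) (nhdsWithin 0 (Set.Ioi 0)) (𝓝 μ) := by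
  have h : HasDerivAt (fun x : ℝ => 1 - Real.exp (-μ * x)) μ 0 := by
    have h1 : HasDerivAt (fun x : ℝ => -μ * x) (-μ) 0 := by
      simpa using (hasDerivAt_id (0:ℝ)).const_mul (-μ)
    have h2 := (Real.hasDerivAt_exp ((-μ) * 0)).comp 0 h1
    have h3 := (hasDerivAt_const (0:ℝ) (1:ℝ)).sub h2
    simpa [Function.comp_def, Pi.sub_def] using h3
  have := hasDerivAt_iff_tendsto_slope.mp h
  have h4 : Tendsto (slope (fun x : ℝ => 1 - Real.exp (-μ * x)) 0)
      (nhdsWithin 0 (Set.Ioi 0)) (𝓝 μ) :=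
    this.mono_left (nhdsWithin_mono _ (fun x hx => by
      simp only [Set.mem_compl_iff, Set.mem_singleton_iff]
      exact ne_of_gt hx))
  refine h4.congr (fun x => ?_)
  simp [slope_def_field]

lemma exp_lim (μ : ℝ) :
    Tendsto (fun Δ : ℝ => Real.exp (-μ * Δ)) (nhdsWithin 0 (Set.Ioi 0)) (𝓝 1) := by
  have : Continuous fun Δ : ℝ => Real.exp (-μ * Δ) :=
    Real.continuous_exp.comp (continuous_const.mul continuous_id)
  have h2 : Tendsto (fun Δ : ℝ => Real.exp (-μ * Δ)) (nhdsWithin 0 (Set.Ioi 0))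
      (𝓝 (Real.exp (-μ * 0))) := (this.tendsto 0).mono_left nhdsWithin_le_nhds
  simpa using h2

/-- The normalized expected number of D2D repairs per time unit tends to `nμ` as `Δ → 0⁺`,
for any fixed repair access `r` with `0 ≤ r ≤ n-1`. -/
theorem d2d_repair_rate_limit (n r : ℕ) (hn : 1 ≤ n) (hr : r ≤ n - 1) (μ : ℝ) (hμ : 0 < μ) :
    Tendsto (fun Δ : ℝ => (1 / Δ) *
        ∑ i ∈ Finset.Icc r n, ((n : ℝ) - i) * (n.choose i) *
          Real.exp (-μ * Δ) ^ i * (1 - Real.exp (-μ * Δ)) ^ (n - i))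
      (nhdsWithin 0 (Set.Ioi 0)) (𝓝 ((n : ℝ) * μ)) := by
  set L : ℕ → ℝ := fun i => if i = n - 1 then (n : ℝ) * μ else 0 with hL
  have hsum : ∑ i ∈ Finset.Icc r n, L i = (n : ℝ) * μ := by
    rw [hL]
    rw [Finset.sum_ite_eq' (Finset.Icc r n) (n - 1) (fun _ => (n : ℝ) * μ)]
    rw [if_pos (Finset.mem_Icc.mpr ⟨hr, Nat.sub_le n 1⟩)]
  rw [← hsum]
  have key : ∀ i ∈ Finset.Icc r n,
      Tendsto (fun Δ : ℝ => (1 / Δ) * (((n : ℝ) - i) * (n.choose i) *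
          Real.exp (-μ * Δ) ^ i * (1 - Real.exp (-μ * Δ)) ^ (n - i)))
        (nhdsWithin 0 (Set.Ioi 0)) (𝓝 (L i)) := by
    intro i hi
    rcases eq_or_lt_of_le (Finset.mem_Icc.mp hi).2 with hin | hin
    · subst hin
      have hL0 : L i = 0 := if_neg (by omega)
      rw [hL0]
      have heq0 : (fun Δ : ℝ => (1 / Δ) * (((i : ℝ) - i) * (i.choose i) *
          Real.exp (-μ * Δ) ^ i * (1 - Real.exp (-μ * Δ)) ^ (i - i))) = fun _ => 0 := by
        funext Δ; simp [sub_self]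
      rw [heq0]
      exact tendsto_const_nhds
    · -- i < n
      obtain ⟨k, hk⟩ : ∃ k, n - i = k + 1 := ⟨n - i - 1, by omega⟩
      have heq : ∀ Δ : ℝ, (1 / Δ) * (((n : ℝ) - i) * (n.choose i) *
          Real.exp (-μ * Δ) ^ i * (1 - Real.exp (-μ * Δ)) ^ (n - i))
          = (((n : ℝ) - i) * (n.choose i)) * Real.exp (-μ * Δ) ^ i *
            (1 - Real.exp (-μ * Δ)) ^ k * ((1 - Real.exp (-μ * Δ)) / Δ) := by
        intro Δ
        rw [hk, pow_succ]
        ring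
      simp only [heq]
      have h1 : Tendsto (fun Δ : ℝ => (((n : ℝ) - i) * (n.choose i)) *
          Real.exp (-μ * Δ) ^ i * (1 - Real.exp (-μ * Δ)) ^ k * ((1 - Real.exp (-μ * Δ)) / Δ))
          (nhdsWithin 0 (Set.Ioi 0))
          (𝓝 ((((n : ℝ) - i) * (n.choose i)) * (1:ℝ) ^ i * ((1:ℝ) - 1) ^ k * μ)) := by
        exact (((tendsto_const_nhds.mul ((exp_lim μ).pow i)).mul
          ((tendsto_const_nhds.sub (exp_lim μ)).pow k)).mul (slope_lim μ))
      convert h1 using 1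
      rcases Nat.eq_zero_or_pos k with hk0 | hk0
      · subst hk0
        have hi' : i = n - 1 := by omega
        have hc : (n.choose i : ℝ) = n := by
          rw [hi', Nat.choose_symm hn, Nat.choose_one_right]
        have hni : (n : ℝ) - i = 1 := by
          rw [hi', Nat.cast_sub hn]; push_cast; ring
        simp only [hL, if_pos hi', hni, hc, one_pow, pow_zero]
        ring
      · have hi' : i ≠ n - 1 := by omega
        simp only [hL, if_neg hi', sub_self, zero_pow hk0.ne']
        ring
  have := tendsto_finset_sum (Finset.Icc r n) key
  refine this.congr (fun Δ => ?_)
  rw [Finset.mul_sum]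
end

section
/- Let S_h = Σ_{i=h}^n T_i be a sum of independent exponential random variables with distinct rates μ_i = iμ (μ > 0). Then for Δ > 0, (1/Δ)·E[min(S_h, Δ)] = (1/Δ)·Σ_{i=h}^n ((1 - e^{-μ_i Δ})/μ_i) ∏_{j=h, j≠i}^n μ_j/(μ_j - μ_i). Equivalently, if W is uniform on [0,Δ) independent of S_h, then P(W < S_h) equals this expression. -/
set_option maxHeartbeats 1000000
open scoped ENNReal NNReal
open Finset MeasureTheory ProbabilityTheory Real

lemma lagrange_id (v : ℕ → ℝ) (s : Finset ℕ) (hs : s.Nonempty) (hinj : Set.InjOn v ↑s) :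
    ∑ i ∈ s, ∏ j ∈ s.erase i, v j / (v j - v i) = 1 := by
  have h := congrArg (Polynomial.eval 0) (Lagrange.sum_basis hinj hs)
  rw [Polynomial.eval_finset_sum, Polynomial.eval_one] at h
  rw [← h]
  refine Finset.sum_congr rfl fun i hi => ?_
  rw [Lagrange.basis, Polynomial.eval_prod]
  refine Finset.prod_congr rfl fun j hj => ?_
  rw [Lagrange.basisDivisor]
  simp only [Polynomial.eval_mul, Polynomial.eval_C, Polynomial.eval_sub, Polynomial.eval_X]
  rw [zero_sub, div_eq_mul_inv, show v i - v j = -(v j - v i) by ring, inv_neg]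
  ring

lemma expMeasure_eq (r : ℝ) : expMeasure r = volume.withDensity (exponentialPDF r) := rfl

lemma expMeasure_Iio (r : ℝ) : expMeasure r (Set.Iio 0) = 0 := by
  rw [expMeasure_eq, withDensity_apply _ measurableSet_Iio]
  exact lintegral_exponentialPDF_of_nonpos le_rfl

lemma expMeasure_ae_nonneg (r : ℝ) : ∀ᵐ x ∂(expMeasure r), 0 ≤ x := by
  rw [MeasureTheory.ae_iff]
  have : {x : ℝ | ¬ 0 ≤ x} = Set.Iio 0 := by ext x; simp
  rw [this]; exact expMeasure_Iio r

lemma integral_expMeasure (r : ℝ) (hr : 0 < r) (g : ℝ → ℝ) :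
    ∫ x, g x ∂(expMeasure r) = ∫ x, exponentialPDFReal r x * g x := by
  have hm : Measurable fun x => (exponentialPDFReal r x).toNNReal :=
    (measurable_exponentialPDFReal r).real_toNNReal
  have h : expMeasure r
      = volume.withDensity (fun x => ((exponentialPDFReal r x).toNNReal : ℝ≥0∞)) := rfl
  rw [h, integral_withDensity_eq_integral_smul hm]
  refine integral_congr_ae (Filter.Eventually.of_forall fun x => ?_)
  show (exponentialPDFReal r x).toNNReal • g x = _
  rw [NNReal.smul_def, Real.coe_toNNReal _ (exponentialPDFReal_nonneg hr x), smul_eq_mul]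

lemma exponentialPDFReal_of_nonneg' {r x : ℝ} (hx : 0 ≤ x) :
    exponentialPDFReal r x = r * Real.exp (-r * x) := by
  rw [exponentialPDFReal, gammaPDFReal]
  simp only [rpow_one, Real.Gamma_one, div_one, sub_self, rpow_zero, mul_one, if_pos hx, neg_mul]

lemma expmin_formula {Ω : Type*} [MeasureSpace Ω] [IsProbabilityMeasure (ℙ : Measure Ω)]
    (lam : ℕ → ℝ) (T : ℕ → Ω → ℝ) (hmeas : ∀ i, Measurable (T i))
    (hindep : iIndepFun T ℙ) :
    ∀ s : Finset ℕ, (∀ i ∈ s, 0 < lam i) → Set.InjOn lam ↑s →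
      (∀ i ∈ s, Measure.map (T i) ℙ = expMeasure (lam i)) →
      ∀ Δ : ℝ, 0 ≤ Δ →
      ∫ ω, min (∑ i ∈ s, T i ω) Δ ∂ℙ =
        ∑ i ∈ s, ((1 - Real.exp (-lam i * Δ)) / lam i)
          * ∏ j ∈ s.erase i, lam j / (lam j - lam i) := by
  intro s
  induction s using Finset.induction_on with
  | empty =>
    intro _ _ _ Δ hΔ
    simp [min_eq_left hΔ]
  | @insert a F ha IH =>
    intro hpos hinj hdist Δ hΔ
    have hsub : (F : Set ℕ) ⊆ ↑(insert a F) := by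
      simp only [Finset.coe_insert]; exact Set.subset_insert _ _
    have hr : 0 < lam a := hpos a (mem_insert_self a F)
    have hposF : ∀ i ∈ F, 0 < lam i := fun i hi => hpos i (mem_insert_of_mem hi)
    have hinjF : Set.InjOn lam ↑F := hinj.mono hsub
    have hdistF : ∀ i ∈ F, Measure.map (T i) ℙ = expMeasure (lam i) :=
      fun i hi => hdist i (mem_insert_of_mem hi)
    have hne : ∀ i ∈ F, lam i ≠ lam a := by
      intro i hi h
      exact ha (by
        have := hinj (by simp [hi] : i ∈ (↑(insert a F) : Set ℕ))
          (by simp : a ∈ (↑(insert a F) : Set ℕ)) h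
        rwa [← this])
    set Y : Ω → ℝ := fun ω => ∑ i ∈ F, T i ω with hYdef
    have hY : Measurable Y := Finset.measurable_sum _ (fun i _ => hmeas i)
    set ν : Measure ℝ := Measure.map Y ℙ with hνdef
    haveI : IsProbabilityMeasure ν := Measure.isProbabilityMeasure_map hY.aemeasurable
    haveI : IsProbabilityMeasure (expMeasure (lam a)) := isProbabilityMeasure_expMeasure hr
    set c : ℕ → ℝ := fun i => ∏ j ∈ F.erase i, lam j / (lam j - lam i) with hcdef
    set G : ℝ → ℝ := fun t => ∑ i ∈ F, ((1 - Real.exp (-lam i * t)) / lam i) * c i with hGdef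
    have IH' : ∀ t : ℝ, 0 ≤ t → ∫ ω, min (Y ω) t ∂ℙ = G t :=
      fun t ht => IH hposF hinjF hdistF t ht
    -- a.e. nonnegativity
    have hYae : ∀ᵐ ω ∂ℙ, 0 ≤ Y ω := by
      have h1 : ∀ i ∈ F, ∀ᵐ ω ∂ℙ, 0 ≤ T i ω := by
        intro i hi
        rw [MeasureTheory.ae_iff]
        have hset : {ω | ¬ 0 ≤ T i ω} = T i ⁻¹' (Set.Iio 0) := by ext ω; simp
        rw [hset, ← Measure.map_apply (hmeas i) measurableSet_Iio, hdistF i hi]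
        exact expMeasure_Iio _
      have h2 : ∀ᵐ ω ∂ℙ, ∀ i ∈ F, 0 ≤ T i ω := (ae_ball_iff F.countable_toSet).mpr h1
      exact h2.mono fun ω hω => Finset.sum_nonneg hω
    have hνae : ∀ᵐ y ∂ν, 0 ≤ y := by
      rw [hνdef, ae_map_iff hY.aemeasurable (measurableSet_Ici : MeasurableSet {y : ℝ | 0 ≤ y})]
      exact hYae
    -- independence and product measure
    have hTind : IndepFun (T a) Y ℙ := by
      have h := hindep.indepFun_finsetSum_of_notMem hmeas ha
      have he : (∑ j ∈ F, T j) = Y := by funext ω; rw [Finset.sum_apply]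
      rw [he] at h
      exact h.symm
    have hmap : Measure.map (fun ω => (T a ω, Y ω)) ℙ = (expMeasure (lam a)).prod ν := by
      rw [← hdist a (mem_insert_self a F), hνdef]
      exact (indepFun_iff_map_prod_eq_prod_map_map (hmeas a).aemeasurable
        hY.aemeasurable).mp hTind
    -- continuity / integrability of the kernel
    have hcont : Continuous (fun p : ℝ × ℝ => min (p.1 + p.2) Δ) :=
      (continuous_fst.add continuous_snd).min continuous_const
    have hprodae : ∀ᵐ p : ℝ × ℝ ∂((expMeasure (lam a)).prod ν), 0 ≤ p.1 ∧ 0 ≤ p.2 := by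
      have hx : ∀ᵐ p : ℝ × ℝ ∂((expMeasure (lam a)).prod ν), 0 ≤ p.1 := by
        rw [MeasureTheory.ae_iff]
        refine measure_mono_null (fun p hp => ?_)
          (?_ : ((expMeasure (lam a)).prod ν) (Set.Iio 0 ×ˢ Set.univ) = 0)
        · exact ⟨by simpa using not_le.mp hp, Set.mem_univ _⟩
        · rw [Measure.prod_prod, expMeasure_Iio, zero_mul]
      have hy : ∀ᵐ p : ℝ × ℝ ∂((expMeasure (lam a)).prod ν), 0 ≤ p.2 := by
        rw [MeasureTheory.ae_iff]
        refine measure_mono_null (fun p hp => ?_)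
          (?_ : ((expMeasure (lam a)).prod ν) (Set.univ ×ˢ Set.Iio 0) = 0)
        · exact ⟨Set.mem_univ _, by simpa using not_le.mp hp⟩
        · rw [Measure.prod_prod]
          have : ν (Set.Iio 0) = 0 := by
            have h := hνae
            rw [MeasureTheory.ae_iff] at h
            have hs : {y : ℝ | ¬ 0 ≤ y} = Set.Iio 0 := by ext y; simp
            rwa [hs] at h
          rw [this, mul_zero]
      exact hx.and hy
    have hf : Integrable (fun p : ℝ × ℝ => min (p.1 + p.2) Δ) ((expMeasure (lam a)).prod ν) := by
      refine Integrable.mono' (integrable_const Δ) hcont.aestronglyMeasurable ?_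
      refine hprodae.mono fun p hp => ?_
      rw [Real.norm_eq_abs, abs_le]
      constructor
      · have : (0:ℝ) ≤ min (p.1 + p.2) Δ := le_min (by linarith [hp.1, hp.2]) hΔ
        linarith
      · exact min_le_right _ _
    set φ : ℝ → ℝ := fun x => if x ≤ Δ then x + G (Δ - x) else Δ with hφdef
    have hinner : ∀ x : ℝ, 0 ≤ x → ∫ y, min (x + y) Δ ∂ν = φ x := by
      intro x hx
      by_cases hxΔ : x ≤ Δ
      · have hminid : ∀ y : ℝ, min (x + y) Δ = x + min y (Δ - x) := by
          intro y
          rw [← min_add_add_left]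
          congr 1
          ring
        have hint : Integrable (fun y => min y (Δ - x)) ν := by
          refine Integrable.mono' (integrable_const Δ)
            ((continuous_id.min continuous_const).aestronglyMeasurable) ?_
          refine hνae.mono fun y hy => ?_
          rw [Real.norm_eq_abs, abs_le]
          refine ⟨le_min (by linarith) (by linarith), (min_le_right _ _).trans (by linarith)⟩
        simp_rw [hminid]
        rw [integral_add (integrable_const x) hint, integral_const]
        simp only [measure_univ, ENNReal.toReal_one, probReal_univ, one_smul, smul_eq_mul, one_mul]
        have hmap2 : ∫ y, min y (Δ - x) ∂ν = ∫ ω, min (Y ω) (Δ - x) ∂ℙ := by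
          rw [hνdef]
          exact integral_map hY.aemeasurable
            ((continuous_id.min continuous_const).aestronglyMeasurable)
        rw [hmap2, IH' (Δ - x) (by linarith)]
        simp only [hφdef, if_pos hxΔ]
      · have hae : ∀ᵐ y ∂ν, min (x + y) Δ = Δ :=
          hνae.mono fun y hy => min_eq_right (by linarith [not_le.mp hxΔ])
        rw [integral_congr_ae hae, integral_const]
        simp only [measure_univ, ENNReal.toReal_one, probReal_univ, one_smul, hφdef, if_neg hxΔ]
    have hGmeas : Measurable G := by
      rw [hGdef]; fun_prop
    have hφmeas : Measurable φ := by
      refine Measurable.ite (measurableSet_Iic : MeasurableSet {x : ℝ | x ≤ Δ}) ?_ measurable_const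
      exact measurable_id'.add (hGmeas.comp (measurable_const.sub measurable_id'))
    -- bound on G
    set B : ℝ := ∑ i ∈ F, (1 / lam i) * |c i| with hBdef
    have hB0 : 0 ≤ B :=
      Finset.sum_nonneg fun i hi =>
        mul_nonneg (one_div_nonneg.mpr (hposF i hi).le) (abs_nonneg _)
    have hGbound : ∀ t : ℝ, 0 ≤ t → |G t| ≤ B := by
      intro t ht
      refine (Finset.abs_sum_le_sum_abs _ _).trans (Finset.sum_le_sum fun i hi => ?_)
      rw [abs_mul, abs_div]
      have h1 : |1 - Real.exp (-lam i * t)| ≤ 1 := by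
        rw [abs_le]
        have he1 : Real.exp (-lam i * t) ≤ 1 := by
          rw [Real.exp_le_one_iff]
          have := (hposF i hi).le
          nlinarith
        have he2 : 0 < Real.exp (-lam i * t) := Real.exp_pos _
        constructor <;> nlinarith
      have h2 : |lam i| = lam i := abs_of_pos (hposF i hi)
      rw [h2]
      exact mul_le_mul_of_nonneg_right
        ((div_le_div_iff_of_pos_right (hposF i hi)).mpr h1) (abs_nonneg _)
    set ψ : ℝ → ℝ := fun x => φ x - Δ with hψdef
    have hψmeas : Measurable ψ := hφmeas.sub measurable_const
    have hψint : Integrable ψ (expMeasure (lam a)) := by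
      refine Integrable.mono' (integrable_const (Δ + B)) hψmeas.aestronglyMeasurable ?_
      refine (expMeasure_ae_nonneg (lam a)).mono fun x hx => ?_
      by_cases hxΔ : x ≤ Δ
      · simp only [hψdef, hφdef, if_pos hxΔ, Real.norm_eq_abs]
        have hG := hGbound (Δ - x) (by linarith)
        have habs : |x + G (Δ - x) - Δ| ≤ |x - Δ| + |G (Δ - x)| := by
          have : x + G (Δ - x) - Δ = (x - Δ) + G (Δ - x) := by ring
          rw [this]
          exact abs_add_le _ _
        have h2 : |x - Δ| ≤ Δ := by rw [abs_le]; constructor <;> linarith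
        linarith
      · simp only [hψdef, hφdef, if_neg hxΔ, sub_self, norm_zero]
        linarith
    have hGcont : Continuous G := by rw [hGdef]; fun_prop
    -- Step 1: reduce to an integral against the exponential measure
    have step1 : ∫ ω, min (∑ i ∈ insert a F, T i ω) Δ ∂ℙ
        = ∫ x, φ x ∂(expMeasure (lam a)) := by
      have e1 : ∀ ω, (∑ i ∈ insert a F, T i ω) = T a ω + Y ω := fun ω => by
        rw [Finset.sum_insert ha]
      calc ∫ ω, min (∑ i ∈ insert a F, T i ω) Δ ∂ℙ
          = ∫ ω, min (T a ω + Y ω) Δ ∂ℙ := by simp_rw [e1]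
        _ = ∫ p : ℝ × ℝ, min (p.1 + p.2) Δ ∂((expMeasure (lam a)).prod ν) := by
            rw [← hmap, integral_map ((hmeas a).prodMk hY).aemeasurable
              hcont.aestronglyMeasurable]
        _ = ∫ x, ∫ y, min (x + y) Δ ∂ν ∂(expMeasure (lam a)) := integral_prod _ hf
        _ = ∫ x, φ x ∂(expMeasure (lam a)) :=
            integral_congr_ae ((expMeasure_ae_nonneg (lam a)).mono fun x hx => hinner x hx)
    -- Step 2: subtract the constant Δ
    have step2 : ∫ x, φ x ∂(expMeasure (lam a)) = Δ + ∫ x, ψ x ∂(expMeasure (lam a)) := by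
      have h : ∀ x, φ x = ψ x + Δ := fun x => by simp [hψdef]
      calc ∫ x, φ x ∂(expMeasure (lam a)) = ∫ x, (ψ x + Δ) ∂(expMeasure (lam a)) := by
            simp_rw [h]
        _ = (∫ x, ψ x ∂(expMeasure (lam a))) + ∫ _x, Δ ∂(expMeasure (lam a)) :=
            integral_add hψint (integrable_const Δ)
        _ = Δ + ∫ x, ψ x ∂(expMeasure (lam a)) := by
            rw [integral_const]
            simp only [measure_univ, ENNReal.toReal_one, probReal_univ, one_smul]
            ring
    -- Step 3: rewrite as an interval integral
    have step3 : ∫ x, ψ x ∂(expMeasure (lam a))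
        = ∫ x in (0:ℝ)..Δ, lam a * Real.exp (-lam a * x) * (x - Δ + G (Δ - x)) := by
      rw [integral_expMeasure (lam a) hr ψ]
      have hae0 : ∀ᵐ x : ℝ ∂volume, x ∈ (Set.Ioc (0:ℝ) Δ)ᶜ →
          exponentialPDFReal (lam a) x * ψ x = 0 := by
        have h0 : ∀ᵐ x : ℝ ∂volume, x ≠ 0 := by
          rw [MeasureTheory.ae_iff]
          have : {x : ℝ | ¬ x ≠ 0} = {0} := by ext y; simp
          rw [this]
          exact measure_singleton 0
        refine h0.mono fun x hx0 hx => ?_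
        simp only [Set.mem_compl_iff, Set.mem_Ioc, not_and_or, not_lt, not_le] at hx
        rcases hx with hx | hx
        · have hxneg : x < 0 := lt_of_le_of_ne hx hx0
          have : exponentialPDFReal (lam a) x = 0 := by
            rw [exponentialPDFReal, gammaPDFReal, if_neg (not_le.mpr hxneg)]
          rw [this, zero_mul]
        · have : ψ x = 0 := by simp [hψdef, hφdef, if_neg (not_le.mpr hx)]
          rw [this, mul_zero]
      rw [← setIntegral_eq_integral_of_ae_compl_eq_zero hae0]
      rw [← intervalIntegral.integral_of_le hΔ]
      refine intervalIntegral.integral_congr_ae ?_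
      have h0 : ∀ᵐ x : ℝ ∂volume, x ≠ 0 := by
        rw [MeasureTheory.ae_iff]
        have : {x : ℝ | ¬ x ≠ 0} = {0} := by ext y; simp
        rw [this]
        exact measure_singleton 0
      refine h0.mono fun x hx0 hx => ?_
      rw [Set.uIoc_of_le hΔ] at hx
      have hx1 : 0 < x := lt_of_le_of_ne hx.1.le (Ne.symm hx0)
      rw [exponentialPDFReal_of_nonneg' hx1.le]
      simp only [hψdef, hφdef, if_pos hx.2]
      ring
    -- Step 4: evaluate the interval integral
    have hsplit : ∫ x in (0:ℝ)..Δ, lam a * Real.exp (-lam a * x) * (x - Δ + G (Δ - x))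
        = ((1 - Real.exp (-lam a * Δ)) / lam a - Δ)
          + ∑ i ∈ F, (c i / lam i) * (1 - Real.exp (-lam a * Δ)
              + (lam a / (lam i - lam a))
                * (Real.exp (-lam i * Δ) - Real.exp (-lam a * Δ))) := by
      have hpt : ∀ x : ℝ, lam a * Real.exp (-lam a * x) * (x - Δ + G (Δ - x))
          = lam a * Real.exp (-lam a * x) * (x - Δ)
            + ∑ i ∈ F, (c i / lam i) * (lam a * Real.exp (-lam a * x)
                - lam a * Real.exp (-lam a * x) * Real.exp (-lam i * (Δ - x))) := by
        intro x
        simp only [hGdef]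
        rw [mul_add, Finset.mul_sum]
        congr 1
        refine Finset.sum_congr rfl fun i hi => ?_
        have h1 : lam i ≠ 0 := (hposF i hi).ne'
        field_simp
      rw [intervalIntegral.integral_congr (fun x _ => hpt x)]
      have hint0 : IntervalIntegrable (fun x => lam a * Real.exp (-lam a * x) * (x - Δ))
          volume 0 Δ := Continuous.intervalIntegrable (by fun_prop) _ _
      have hinti : ∀ i ∈ F, IntervalIntegrable
          (fun x => (c i / lam i) * (lam a * Real.exp (-lam a * x)
            - lam a * Real.exp (-lam a * x) * Real.exp (-lam i * (Δ - x)))) volume 0 Δ :=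
        fun i hi => Continuous.intervalIntegrable (by fun_prop) _ _
      have hintsum : IntervalIntegrable (fun x => ∑ i ∈ F, (c i / lam i)
          * (lam a * Real.exp (-lam a * x)
            - lam a * Real.exp (-lam a * x) * Real.exp (-lam i * (Δ - x)))) volume 0 Δ :=
        Continuous.intervalIntegrable
          (continuous_finset_sum _ fun i _ => by fun_prop) _ _
      rw [intervalIntegral.integral_add hint0 hintsum,
        intervalIntegral.integral_finset_sum hinti]
      congr 1
      · -- the base integral
        have hder : ∀ x ∈ Set.uIcc (0:ℝ) Δ, HasDerivAt
            (fun t => (-(t - Δ) - 1 / lam a) * Real.exp (-lam a * t))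
            (lam a * Real.exp (-lam a * x) * (x - Δ)) x := by
          intro x _
          have h1 : HasDerivAt (fun t : ℝ => -(t - Δ) - 1 / lam a) (-1) x := by
            simpa using (((hasDerivAt_id x).sub_const Δ).neg).sub_const (1 / lam a)
          have h2 : HasDerivAt (fun t : ℝ => Real.exp (-lam a * t))
              (-lam a * Real.exp (-lam a * x)) x := by
            simpa [mul_comm] using ((hasDerivAt_id x).const_mul (-lam a)).exp
          have h5 := h1.mul h2
          refine h5.congr_deriv ?_
          field_simp
          ring
        rw [intervalIntegral.integral_eq_sub_of_hasDerivAt hder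
          (Continuous.intervalIntegrable (by fun_prop) _ _)]
        simp only [mul_zero, Real.exp_zero, sub_self, neg_zero, zero_sub, neg_neg, mul_one]
        field_simp
        ring
      · refine Finset.sum_congr rfl fun i hi => ?_
        rw [intervalIntegral.integral_const_mul]
        congr 1
        have h3ne : lam i - lam a ≠ 0 := sub_ne_zero.mpr (hne i hi)
        have hderi : ∀ x ∈ Set.uIcc (0:ℝ) Δ, HasDerivAt
            (fun t => -Real.exp (-lam a * t)
              - (lam a / (lam i - lam a))
                * (Real.exp (-lam i * Δ) * Real.exp ((lam i - lam a) * t)))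
            (lam a * Real.exp (-lam a * x)
              - lam a * Real.exp (-lam a * x) * Real.exp (-lam i * (Δ - x))) x := by
          intro x _
          have h2 : HasDerivAt (fun t : ℝ => Real.exp (-lam a * t))
              (-lam a * Real.exp (-lam a * x)) x := by
            simpa [mul_comm] using ((hasDerivAt_id x).const_mul (-lam a)).exp
          have h3 : HasDerivAt (fun t : ℝ => Real.exp ((lam i - lam a) * t))
              ((lam i - lam a) * Real.exp ((lam i - lam a) * x)) x := by
            simpa [mul_comm] using ((hasDerivAt_id x).const_mul (lam i - lam a)).exp
          have h4 := (h3.const_mul (Real.exp (-lam i * Δ))).const_mul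
            (lam a / (lam i - lam a))
          have h5 := h2.neg.sub h4
          refine h5.congr_deriv ?_
          have hexp : Real.exp (-lam i * Δ) * Real.exp ((lam i - lam a) * x)
              = Real.exp (-lam a * x) * Real.exp (-lam i * (Δ - x)) := by
            rw [← Real.exp_add, ← Real.exp_add]
            congr 1
            ring
          have h6 : (lam a / (lam i - lam a)) * (Real.exp (-lam i * Δ)
                * ((lam i - lam a) * Real.exp ((lam i - lam a) * x)))
              = lam a * (Real.exp (-lam a * x) * Real.exp (-lam i * (Δ - x))) := by
            calc (lam a / (lam i - lam a)) * (Real.exp (-lam i * Δ)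
                  * ((lam i - lam a) * Real.exp ((lam i - lam a) * x)))
                = lam a * (Real.exp (-lam i * Δ) * Real.exp ((lam i - lam a) * x)) := by
                  field_simp
              _ = lam a * (Real.exp (-lam a * x) * Real.exp (-lam i * (Δ - x))) := by
                  rw [hexp]
          rw [h6]
          ring
        rw [intervalIntegral.integral_eq_sub_of_hasDerivAt hderi
          (Continuous.intervalIntegrable (by fun_prop) _ _)]
        have hexp2 : Real.exp (-lam i * Δ) * Real.exp ((lam i - lam a) * Δ)
            = Real.exp (-lam a * Δ) := by
          rw [← Real.exp_add]
          congr 1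
          ring
        simp only [mul_zero, Real.exp_zero, mul_one]
        rw [hexp2]
        field_simp
        ring
    rw [step1, step2, step3, hsplit]
    -- Step 5: final algebra using the Lagrange interpolation identity
    have hprodrw : ∀ i ∈ F, ∏ j ∈ (insert a F).erase i, lam j / (lam j - lam i)
        = (lam a / (lam a - lam i)) * c i := by
      intro i hi
      have hai : a ≠ i := fun h => ha (h ▸ hi)
      rw [Finset.erase_insert_of_ne hai,
        Finset.prod_insert (fun h => ha (Finset.mem_of_mem_erase h))]
    have hlag := lagrange_id lam (insert a F) ⟨a, mem_insert_self a F⟩ hinj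
    rw [Finset.sum_insert ha, Finset.erase_insert ha, Finset.sum_congr rfl hprodrw] at hlag
    have hsum2 : ∑ i ∈ F, ((1 - Real.exp (-lam i * Δ)) / lam i)
          * ∏ j ∈ (insert a F).erase i, lam j / (lam j - lam i)
        = ∑ i ∈ F, ((1 - Real.exp (-lam i * Δ)) / lam i)
          * ((lam a / (lam a - lam i)) * c i) :=
      Finset.sum_congr rfl fun i hi => by rw [hprodrw i hi]
    rw [Finset.sum_insert ha, Finset.erase_insert ha, hsum2]
    have hkey : ∀ i ∈ F, (c i / lam i) * (1 - Real.exp (-lam a * Δ)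
          + (lam a / (lam i - lam a)) * (Real.exp (-lam i * Δ) - Real.exp (-lam a * Δ)))
        = ((1 - Real.exp (-lam i * Δ)) / lam i) * ((lam a / (lam a - lam i)) * c i)
          - ((1 - Real.exp (-lam a * Δ)) / lam a) * ((lam a / (lam a - lam i)) * c i) := by
      intro i hi
      have h1 : lam i ≠ 0 := (hposF i hi).ne'
      have h2 : lam a ≠ 0 := hr.ne'
      have h3 : lam i - lam a ≠ 0 := sub_ne_zero.mpr (hne i hi)
      have h4 : lam a - lam i ≠ 0 := sub_ne_zero.mpr (Ne.symm (hne i hi))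
      field_simp
      ring
    rw [Finset.sum_congr rfl hkey, Finset.sum_sub_distrib, ← Finset.mul_sum]
    have hP : ∏ j ∈ F, lam j / (lam j - lam a)
        = 1 - ∑ i ∈ F, lam a / (lam a - lam i) * c i := by linarith
    rw [hP]
    ring


/-- For `S_h = Σ_{i=h}^n T_i` a sum of independent exponential random variables with
distinct rates `μ_i = iμ`, the D2D download probability
`(1/Δ)E[min(S_h, Δ)]` equals `(1/Δ) Σ_{i=h}^n ((1-e^{-μ_i Δ})/μ_i) ∏_{j≠i} μ_j/(μ_j-μ_i)`. -/
theorem download_probability_formula {Ω : Type*} [MeasureSpace Ω]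
    [IsProbabilityMeasure (ℙ : Measure Ω)]
    (n h : ℕ) (hh : 1 ≤ h) (hhn : h ≤ n) (μ : ℝ) (hμ : 0 < μ)
    (T : ℕ → Ω → ℝ) (hmeas : ∀ i, Measurable (T i))
    (hindep : iIndepFun T ℙ)
    (hdist : ∀ i ∈ Finset.Icc h n, Measure.map (T i) ℙ = expMeasure ((i : ℝ) * μ))
    (Δ : ℝ) (hΔ : 0 < Δ) :
    (1 / Δ) * ∫ ω, min (∑ i ∈ Finset.Icc h n, T i ω) Δ ∂ℙ =
      (1 / Δ) * ∑ i ∈ Finset.Icc h n,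
        ((1 - Real.exp (-((i : ℝ) * μ) * Δ)) / ((i : ℝ) * μ)) *
          ∏ j ∈ (Finset.Icc h n).erase i,
            ((j : ℝ) * μ) / ((j : ℝ) * μ - (i : ℝ) * μ) := by
  have hpos : ∀ i ∈ Finset.Icc h n, 0 < ((i : ℝ) * μ) := by
    intro i hi
    have h1 : 1 ≤ i := hh.trans (Finset.mem_Icc.mp hi).1
    have : (0 : ℝ) < (i : ℝ) := by exact_mod_cast lt_of_lt_of_le Nat.zero_lt_one h1
    positivity
  have hinj : Set.InjOn (fun i : ℕ => (i : ℝ) * μ) ↑(Finset.Icc h n) := by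
    intro i _ j _ hij
    have : (i : ℝ) = (j : ℝ) := mul_right_cancel₀ hμ.ne' hij
    exact_mod_cast this
  have key := expmin_formula (fun i : ℕ => (i : ℝ) * μ) T hmeas hindep
    (Finset.Icc h n) hpos hinj hdist Δ hΔ.le
  rw [key]
end

section
/- For fixed t ∈ [0, Δ) and ω, Δ > 0, the density f_{W̃_l}(t) = Σ_{i=0}^∞ ω^l (t + iΔ)^{l-1} e^{-ω(t+iΔ)}/(l-1)! converges to 1/Δ as l → ∞; i.e., the time of the l-th request, reduced modulo the repair interval, becomes asymptotically uniform. -/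
open Filter Topology

section ErlangAux

open MeasureTheory Set intervalIntegral

noncomputable def erl (ωr : ℝ) (n : ℕ) (x : ℝ) : ℝ :=
  ωr ^ (n + 1) * x ^ n * Real.exp (-ωr * x) / (n.factorial : ℝ)

lemma erl_cont (ωr : ℝ) (n : ℕ) : Continuous (erl ωr n) := by
  unfold erl; fun_prop

lemma erl_nonneg {ωr : ℝ} (hω : 0 ≤ ωr) (n : ℕ) {x : ℝ} (hx : 0 ≤ x) : 0 ≤ erl ωr n x := by
  unfold erl; positivity

lemma erl_hasDerivAt {ωr : ℝ} {n : ℕ} (hn : 1 ≤ n) (x : ℝ) :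
    HasDerivAt (erl ωr n)
      (ωr ^ (n + 1) * x ^ (n - 1) * Real.exp (-ωr * x) * ((n : ℝ) - ωr * x) / (n.factorial : ℝ)) x := by
  have h1 : HasDerivAt (fun x : ℝ => -ωr * x) (-ωr) x := by
    simpa using (hasDerivAt_id x).const_mul (-ωr)
  have h2 := h1.exp
  have h3 := (hasDerivAt_pow n x).mul h2
  have h4 := (h3.const_mul (ωr ^ (n + 1))).div_const (n.factorial : ℝ)
  have hfun : (fun x : ℝ => ωr ^ (n + 1) * (x ^ n * Real.exp (-ωr * x)) / (n.factorial : ℝ)) = erl ωr n := by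
    funext y; unfold erl; ring
  simp only [Pi.mul_apply] at h4; rw [hfun] at h4
  refine h4.congr_deriv ?_
  obtain ⟨k, rfl⟩ : ∃ k, n = k + 1 := ⟨n - 1, by omega⟩
  simp only [Nat.add_sub_cancel]
  push_cast
  ring

lemma erl_monotoneOn {ωr : ℝ} (hω : 0 < ωr) {n : ℕ} (hn : 1 ≤ n) :
    MonotoneOn (erl ωr n) (Icc 0 ((n : ℝ) / ωr)) := by
  apply monotoneOn_of_deriv_nonneg (convex_Icc _ _) (erl_cont ωr n).continuousOn
  · intro x hx
    exact (erl_hasDerivAt hn x).differentiableAt.differentiableWithinAt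
  · intro x hx
    rw [interior_Icc] at hx
    rw [(erl_hasDerivAt hn x).deriv]
    have hx0 : 0 < x := hx.1
    have : 0 ≤ (n : ℝ) - ωr * x := by
      have := hx.2
      rw [lt_div_iff₀ hω] at this
      nlinarith
    positivity

lemma erl_antitoneOn {ωr : ℝ} (hω : 0 < ωr) {n : ℕ} (hn : 1 ≤ n) :
    AntitoneOn (erl ωr n) (Ici ((n : ℝ) / ωr)) := by
  apply antitoneOn_of_deriv_nonpos (convex_Ici _) (erl_cont ωr n).continuousOn
  · intro x hx
    exact (erl_hasDerivAt hn x).differentiableAt.differentiableWithinAt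
  · intro x hx
    rw [interior_Ici] at hx
    rw [(erl_hasDerivAt hn x).deriv]
    have hm : 0 < (n : ℝ) / ωr := by positivity
    have hx0 : 0 < x := hm.trans hx
    have h1 : (n : ℝ) - ωr * x ≤ 0 := by
      have hx' : (n : ℝ) / ωr < x := hx
      rw [div_lt_iff₀ hω] at hx'
      nlinarith
    have h2 : 0 ≤ ωr ^ (n + 1) * x ^ (n - 1) * Real.exp (-ωr * x) := by positivity
    have := mul_nonpos_of_nonneg_of_nonpos h2 h1
    exact div_nonpos_of_nonpos_of_nonneg this (by positivity)

lemma erl_le_max {ωr : ℝ} (hω : 0 < ωr) {n : ℕ} (hn : 1 ≤ n) {x : ℝ} (hx : 0 ≤ x) :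
    erl ωr n x ≤ erl ωr n ((n : ℝ) / ωr) := by
  have hm : (0:ℝ) ≤ (n : ℝ) / ωr := by positivity
  rcases le_total x ((n : ℝ) / ωr) with h | h
  · exact erl_monotoneOn hω hn ⟨hx, h⟩ ⟨hm, le_rfl⟩ h
  · exact erl_antitoneOn hω hn (le_refl ((n:ℝ)/ωr) : (n:ℝ)/ωr ∈ Ici _) h h

lemma erl_integrableOn {ωr : ℝ} (hω : 0 < ωr) (n : ℕ) {a : ℝ} :
    IntegrableOn (erl ωr n) (Ioi a) := by
  have hb : 0 < ωr / 2 := by linarith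
  apply integrable_of_isBigO_exp_neg hb (erl_cont ωr n).continuousOn
  apply Asymptotics.isBigO_of_div_tendsto_nhds
  · filter_upwards with x hx
    exact absurd hx (Real.exp_ne_zero _)
  · have h := tendsto_rpow_mul_exp_neg_mul_atTop_nhds_zero (n : ℝ) (ωr / 2) hb
    have hc := h.const_mul (ωr ^ (n + 1) / (n.factorial : ℝ))
    rw [mul_zero] at hc
    apply hc.congr'
    filter_upwards [eventually_gt_atTop (0:ℝ)] with x hx
    rw [Real.rpow_natCast]
    unfold erl
    rw [Pi.div_apply, eq_div_iff (Real.exp_ne_zero _),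
      show Real.exp (-ωr*x) = Real.exp (-(ωr/2)*x) * Real.exp (-(ωr/2)*x) by
        rw [← Real.exp_add]; ring_nf]
    ring

lemma erl_integral {ωr : ℝ} (hω : 0 < ωr) (n : ℕ) :
    ∫ x in Ioi (0:ℝ), erl ωr n x = 1 := by
  have key : ∫ x in Ioi (0:ℝ), x ^ ((n + 1 : ℝ) - 1) * Real.exp (-(ωr * x)) =
      (1 / ωr) ^ (n + 1 : ℝ) * Real.Gamma (n + 1 : ℝ) :=
    Real.integral_rpow_mul_exp_neg_mul_Ioi (by positivity) hω
  have congr1 : ∫ x in Ioi (0:ℝ), erl ωr n x =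
      ∫ x in Ioi (0:ℝ), (ωr ^ (n+1) / (n.factorial : ℝ)) * (x ^ ((n + 1 : ℝ) - 1) * Real.exp (-(ωr * x))) := by
    apply setIntegral_congr_fun measurableSet_Ioi
    intro x hx
    have hx : (0:ℝ) < x := hx
    unfold erl
    dsimp only
    rw [show ((n : ℝ) + 1) - 1 = (n : ℝ) by ring, Real.rpow_natCast, neg_mul]
    ring
  rw [congr1, MeasureTheory.integral_const_mul, key]
  rw [Real.Gamma_nat_eq_factorial]
  rw [show ((n:ℝ) + 1) = ((n+1 : ℕ) : ℝ) by push_cast; ring]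
  rw [Real.rpow_natCast, one_div, inv_pow]
  have h1 : (0:ℝ) < ωr ^ (n+1) := by positivity
  have h2 : (0:ℝ) < (n.factorial : ℝ) := by positivity
  field_simp

lemma erl_max_eq {ωr : ℝ} (hω : 0 < ωr) (n : ℕ) :
    erl ωr n ((n : ℝ) / ωr) = ωr * ((n:ℝ) ^ n * Real.exp (-(n:ℝ)) / (n.factorial : ℝ)) := by
  unfold erl
  rw [div_pow, mul_div_assoc ((n:ℝ)^n)]
  rw [show -ωr * ((n:ℝ) / ωr) = -(n:ℝ) by field_simp]
  field_simp
  ring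

lemma const_mul_le_intervalIntegral {f : ℝ → ℝ} (hf : Continuous f) {a b c : ℝ} (hab : a ≤ b)
    (h : ∀ x ∈ Icc a b, c ≤ f x) : (b - a) * c ≤ ∫ x in a..b, f x := by
  have := intervalIntegral.integral_mono_on (f := fun _ => c) hab (intervalIntegrable_const (μ := volume))
    (hf.intervalIntegrable a b) h
  simpa [intervalIntegral.integral_const, smul_eq_mul] using this

lemma intervalIntegral_le_const_mul {f : ℝ → ℝ} (hf : Continuous f) {a b c : ℝ} (hab : a ≤ b)
    (h : ∀ x ∈ Icc a b, f x ≤ c) : (∫ x in a..b, f x) ≤ (b - a) * c := by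
  have := intervalIntegral.integral_mono_on (g := fun _ => c) hab (hf.intervalIntegrable a b)
    (intervalIntegrable_const (μ := volume)) h
  simpa [intervalIntegral.integral_const, smul_eq_mul] using this

lemma erl_sum_bounds (ωr Δ t : ℝ) (hω : 0 < ωr) (hΔ : 0 < Δ) (ht0 : 0 ≤ t) (htΔ : t < Δ)
    {n : ℕ} (hn : 1 ≤ n) :
    Summable (fun i : ℕ => erl ωr n (t + i * Δ)) ∧
    1/Δ - 3 * erl ωr n ((n:ℝ)/ωr) ≤ (∑' i : ℕ, erl ωr n (t + i * Δ)) ∧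
    (∑' i : ℕ, erl ωr n (t + i * Δ)) ≤ 1/Δ + 2 * erl ωr n ((n:ℝ)/ωr) := by
  set m : ℝ := (n:ℝ)/ωr with hm
  set M : ℝ := erl ωr n m with hMdef
  set X : ℕ → ℝ := fun i => t + i * Δ with hXdef
  have hX0 : X 0 = t := by simp [hXdef]
  have hXsucc : ∀ i, X (i+1) = X i + Δ := by
    intro i; simp only [hXdef]; push_cast; ring
  have hXnn : ∀ i, 0 ≤ X i := by
    intro i
    have : (0:ℝ) ≤ (i:ℝ) * Δ := by positivity
    simp only [hXdef]; linarith
  have hcont := erl_cont ωr n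
  have hM0 : 0 ≤ M := erl_nonneg hω.le n (by positivity)
  have mono : MonotoneOn (erl ωr n) (Icc 0 m) := by rw [hm]; exact erl_monotoneOn hω hn
  have anti : AntitoneOn (erl ωr n) (Ici m) := by rw [hm]; exact erl_antitoneOn hω hn
  have hmax : ∀ {x : ℝ}, 0 ≤ x → erl ωr n x ≤ M := fun hx => erl_le_max hω hn hx
  have haM : ∀ i, erl ωr n (X i) ≤ M := fun i => hmax (hXnn i)
  have hann : ∀ i, 0 ≤ erl ωr n (X i) := fun i => erl_nonneg hω.le n (hXnn i)
  have hIleq : ∀ i : ℕ, X i ≤ X i + Δ := fun i => by linarith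
  -- per-interval integral facts
  have hstepnn : ∀ i, (0:ℝ) ≤ ∫ x in X i..(X i + Δ), erl ωr n x := by
    intro i
    apply intervalIntegral.integral_nonneg (hIleq i)
    intro y hy
    exact erl_nonneg hω.le n (le_trans (hXnn i) hy.1)
  have hincr : ∀ i, X i + Δ ≤ m → Δ * erl ωr n (X i) ≤ ∫ x in X i..(X i + Δ), erl ωr n x := by
    intro i h
    have h' := const_mul_le_intervalIntegral hcont (hIleq i) (fun y hy =>
      mono ⟨hXnn i, by linarith⟩ ⟨le_trans (hXnn i) hy.1, le_trans hy.2 h⟩ hy.1)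
    simpa [add_sub_cancel_left, mul_comm] using h'
  have hincr' : ∀ i, X i + Δ ≤ m → (∫ x in X i..(X i + Δ), erl ωr n x) ≤ Δ * erl ωr n (X i + Δ) := by
    intro i h
    have h' := intervalIntegral_le_const_mul hcont (hIleq i) (fun y hy =>
      mono ⟨le_trans (hXnn i) hy.1, le_trans hy.2 h⟩ ⟨by linarith [hXnn i], h⟩ hy.2)
    simpa [add_sub_cancel_left, mul_comm] using h'
  have hdecr : ∀ i, m ≤ X i → (∫ x in X i..(X i + Δ), erl ωr n x) ≤ Δ * erl ωr n (X i) := by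
    intro i h
    have h' := intervalIntegral_le_const_mul hcont (hIleq i) (fun y hy =>
      anti h (le_trans h hy.1) hy.1)
    simpa [add_sub_cancel_left, mul_comm] using h'
  have hdecr' : ∀ i, m ≤ X i → Δ * erl ωr n (X i + Δ) ≤ ∫ x in X i..(X i + Δ), erl ωr n x := by
    intro i h
    have h' := const_mul_le_intervalIntegral hcont (hIleq i) (fun y hy =>
      anti (le_trans h hy.1) (le_trans h (hIleq i)) hy.2)
    simpa [add_sub_cancel_left, mul_comm] using h'
  have hstepM : ∀ i, (∫ x in X i..(X i + Δ), erl ωr n x) ≤ Δ * M := by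
    intro i
    have h' := intervalIntegral_le_const_mul hcont (hIleq i) (fun y hy =>
      hmax (le_trans (hXnn i) hy.1))
    simpa [add_sub_cancel_left, mul_comm] using h'
  -- upper bound by induction
  have up : ∀ N, (∑ i ∈ Finset.range N, Δ * erl ωr n (X i)) + (if m < X N then Δ * erl ωr n (X N) else 0)
      ≤ (∫ x in t..X N, erl ωr n x) + (if m < X N then 2*(Δ*M) else 0) := by
    intro N
    induction N with
    | zero =>
      rw [hX0, intervalIntegral.integral_same]
      simp only [Finset.range_zero, Finset.sum_empty, zero_add]
      split_ifs with h
      · have h1 : erl ωr n t ≤ M := by simpa [hX0] using haM 0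
        nlinarith
      · norm_num
    | succ N ih =>
      rw [Finset.sum_range_succ, hXsucc N,
        ← intervalIntegral.integral_add_adjacent_intervals (a := t) (b := X N) (c := X N + Δ)
          (hcont.intervalIntegrable _ _) (hcont.intervalIntegrable _ _)]
      have haMN : erl ωr n (X N) ≤ M := haM N
      have haMN1 : erl ωr n (X N + Δ) ≤ M := by
        have := haM (N+1); rwa [hXsucc N] at this
      have hannN1 : 0 ≤ erl ωr n (X N + Δ) := by
        have := hann (N+1); rwa [hXsucc N] at this
      rcases le_or_gt (X N + Δ) m with h1 | h1
      · have hN : X N ≤ m := by linarith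
        simp only [if_neg (not_lt.2 h1)]
        simp only [if_neg (not_lt.2 hN)] at ih
        have key := hincr N h1
        linarith
      · rcases le_or_gt (X N) m with h2 | h2
        · simp only [if_pos h1]
          simp only [if_neg (not_lt.2 h2)] at ih
          have key := hstepnn N
          nlinarith
        · simp only [if_pos h1]
          simp only [if_pos h2] at ih
          have key := hdecr' N h2.le
          linarith
  -- lower bound by induction
  have lo : ∀ N, (∫ x in t..X N, erl ωr n x) ≤ (∑ i ∈ Finset.range N, Δ * erl ωr n (X i))
      + (if X N ≤ m then Δ * erl ωr n (X N) else 0) + (if m < X N then Δ*M else 0) := by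
    intro N
    induction N with
    | zero =>
      rw [hX0, intervalIntegral.integral_same]
      simp only [Finset.range_zero, Finset.sum_empty, zero_add]
      have h1 : 0 ≤ erl ωr n t := by simpa [hX0] using hann 0
      split_ifs with h h'
      · nlinarith
      · nlinarith
      · nlinarith
      · norm_num
    | succ N ih =>
      rw [Finset.sum_range_succ, hXsucc N,
        ← intervalIntegral.integral_add_adjacent_intervals (a := t) (b := X N) (c := X N + Δ)
          (hcont.intervalIntegrable _ _) (hcont.intervalIntegrable _ _)]
      rcases le_or_gt (X N + Δ) m with h1 | h1
      · have hN : X N ≤ m := by linarith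
        simp only [if_pos h1, if_neg (not_lt.2 h1)]
        simp only [if_pos hN, if_neg (not_lt.2 hN)] at ih
        have key := hincr' N h1
        linarith
      · rcases le_or_gt (X N) m with h2 | h2
        · simp only [if_neg (not_le.2 h1), if_pos h1]
          simp only [if_pos h2, if_neg (not_lt.2 h2)] at ih
          have key := hstepM N
          linarith
        · simp only [if_neg (not_le.2 h1), if_pos h1]
          simp only [if_neg (not_le.2 h2), if_pos h2] at ih
          have key := hdecr N h2.le
          linarith
  have htX : ∀ N, t ≤ X N := by
    intro N
    have : (0:ℝ) ≤ (N:ℝ) * Δ := by positivity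
    simp only [hXdef]; linarith
  have hIle1 : ∀ N, (∫ x in t..X N, erl ωr n x) ≤ 1 := by
    intro N
    rw [← erl_integral hω n, intervalIntegral.integral_of_le (htX N)]
    apply setIntegral_mono_set (erl_integrableOn hω n)
    · rw [EventuallyLE, ae_restrict_iff' measurableSet_Ioi]
      exact ae_of_all _ fun x hx => erl_nonneg hω.le n (le_of_lt hx)
    · exact HasSubset.Subset.eventuallyLE (fun x hx => lt_of_le_of_lt ht0 hx.1)
  have hmulsum : ∀ N, ∑ i ∈ Finset.range N, Δ * erl ωr n (X i)
      = Δ * ∑ i ∈ Finset.range N, erl ωr n (X i) := by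
    intro N; rw [Finset.mul_sum]
  have upN : ∀ N, ∑ i ∈ Finset.range N, erl ωr n (X i) ≤ (1 + 2*(Δ*M))/Δ := by
    intro N
    have h := up N
    rw [hmulsum] at h
    have hif1 : 0 ≤ (if m < X N then Δ * erl ωr n (X N) else 0) := by
      split_ifs
      · have := hann N; positivity
      · exact le_refl 0
    have hif2 : (if m < X N then 2*(Δ*M) else 0) ≤ 2*(Δ*M) := by
      split_ifs
      · exact le_refl _
      · positivity
    have hI := hIle1 N
    rw [le_div_iff₀ hΔ, mul_comm]
    linarith
  have hXeq : (fun i : ℕ => erl ωr n (t + i * Δ)) = fun i => erl ωr n (X i) := rfl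
  have hsum : Summable (fun i : ℕ => erl ωr n (X i)) :=
    summable_of_sum_range_le (fun i => hann i) upN
  have hts_le : (∑' i : ℕ, erl ωr n (X i)) ≤ (1 + 2*(Δ*M))/Δ :=
    Real.tsum_le_of_sum_range_le (fun i => hann i) upN
  have hdivU : (1 + 2*(Δ*M))/Δ = 1/Δ + 2*M := by field_simp
  have hXtop : Tendsto X atTop atTop := by
    simp only [hXdef]
    exact tendsto_atTop_add_const_left _ t (tendsto_natCast_atTop_atTop.atTop_mul_const hΔ)
  have hIt : Tendsto (fun N => ∫ x in t..X N, erl ωr n x) atTop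
      (𝓝 (∫ x in Ioi t, erl ωr n x)) :=
    intervalIntegral_tendsto_integral_Ioi t (erl_integrableOn hω n) hXtop
  have hSt : Tendsto (fun N => ∑ i ∈ Finset.range N, erl ωr n (X i)) atTop
      (𝓝 (∑' i : ℕ, erl ωr n (X i))) := hsum.hasSum.tendsto_sum_nat
  have hloN : ∀ N, (∫ x in t..X N, erl ωr n x)
      ≤ Δ * (∑ i ∈ Finset.range N, erl ωr n (X i)) + 2*(Δ*M) := by
    intro N
    have h := lo N
    rw [hmulsum] at h
    have hif1 : (if X N ≤ m then Δ * erl ωr n (X N) else 0) ≤ Δ*M := by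
      split_ifs
      · exact mul_le_mul_of_nonneg_left (haM N) hΔ.le
      · positivity
    have hif2 : (if m < X N then Δ*M else 0) ≤ Δ*M := by
      split_ifs
      · exact le_refl _
      · positivity
    linarith
  have hlim : (∫ x in Ioi t, erl ωr n x) ≤ Δ * (∑' i : ℕ, erl ωr n (X i)) + 2*(Δ*M) :=
    le_of_tendsto_of_tendsto' hIt ((hSt.const_mul Δ).add_const (2*(Δ*M))) hloN
  have hsplit : (∫ x in Ioc 0 t, erl ωr n x) + (∫ x in Ioi t, erl ωr n x) = 1 := by
    have h := (setIntegral_union (s := Ioc (0:ℝ) t) (t := Ioi t) (Set.Ioc_disjoint_Ioi le_rfl)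
      measurableSet_Ioi
      ((erl_integrableOn hω n).mono_set Set.Ioc_subset_Ioi_self) (erl_integrableOn hω n)).symm
    rw [Set.Ioc_union_Ioi_eq_Ioi ht0] at h
    exact h.trans (erl_integral hω n)
  have h0t : (∫ x in Ioc 0 t, erl ωr n x) ≤ Δ * M := by
    rw [← intervalIntegral.integral_of_le ht0]
    have h := intervalIntegral_le_const_mul hcont ht0 (fun y hy => hmax hy.1)
    nlinarith
  have hts_ge : (1 - 3*(Δ*M))/Δ ≤ (∑' i : ℕ, erl ωr n (X i)) := by
    rw [div_le_iff₀ hΔ, mul_comm]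
    linarith
  have hdivL : (1 - 3*(Δ*M))/Δ = 1/Δ - 3*M := by field_simp
  rw [hXeq]
  exact ⟨hsum, by rw [← hdivL]; exact hts_ge, by rw [← hdivU] at *; exact hts_le⟩

noncomputable def erlMax (ωr : ℝ) (n : ℕ) : ℝ :=
  ωr * ((n:ℝ) ^ n * Real.exp (-(n:ℝ)) / (n.factorial : ℝ))

lemma erlMax_tendsto_zero {ωr : ℝ} (hω : 0 < ωr) :
    Tendsto (fun n : ℕ => erlMax ωr n) atTop (𝓝 0) := by
  have hsq : Tendsto (fun n : ℕ => Real.sqrt (2 * n)) atTop atTop := by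
    have hbase : Tendsto (fun n : ℕ => 2 * (n:ℝ)) atTop atTop :=
      Filter.Tendsto.const_mul_atTop (by norm_num : (0:ℝ) < 2) tendsto_natCast_atTop_atTop
    have := (tendsto_rpow_atTop (by norm_num : (0:ℝ) < 1/2)).comp hbase
    apply this.congr'
    filter_upwards with n
    simp only [Function.comp_apply]
    rw [Real.sqrt_eq_rpow]
  have h1 : Tendsto (fun n : ℕ => Real.sqrt (2 * n) * Stirling.stirlingSeq n) atTop atTop :=
    Filter.Tendsto.atTop_mul_pos (Real.sqrt_pos.2 Real.pi_pos) hsq Stirling.tendsto_stirlingSeq_sqrt_pi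
  have h2 := h1.inv_tendsto_atTop
  have h3 := h2.const_mul ωr
  rw [mul_zero] at h3
  apply h3.congr'
  filter_upwards [eventually_ge_atTop 1] with n hn
  have hnpos : (0:ℝ) < n := by exact_mod_cast hn
  have hpe : (0:ℝ) < ((n:ℝ) / Real.exp 1) ^ n := by positivity
  have hsqpos : (0:ℝ) < Real.sqrt (2 * n) := Real.sqrt_pos.2 (by positivity)
  have hfac : (0:ℝ) < (n.factorial : ℝ) := by positivity
  have hs : Real.sqrt (2 * n) * Stirling.stirlingSeq n
      = (n.factorial : ℝ) / (((n:ℝ) / Real.exp 1) ^ n) := by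
    rw [Stirling.stirlingSeq]
    field_simp
  simp only [Pi.inv_apply]
  rw [hs, inv_div, erlMax, div_pow, Real.exp_one_pow, Real.exp_neg]
  ring

end ErlangAux

/-- The density of the Erlang arrival time reduced modulo the repair interval becomes
asymptotically uniform: for fixed `t ∈ [0, Δ)`,
`Σ_{i=0}^∞ ω^l (t+iΔ)^{l-1} e^{-ω(t+iΔ)}/(l-1)! → 1/Δ` as `l → ∞`. -/
theorem erlang_mod_density_uniform_limit (ωr Δ t : ℝ) (hω : 0 < ωr) (hΔ : 0 < Δ)
    (ht : t ∈ Set.Ico 0 Δ) :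
    Tendsto (fun l : ℕ => ∑' i : ℕ, ωr ^ l * (t + i * Δ) ^ (l - 1) *
        Real.exp (-ωr * (t + i * Δ)) / (l - 1).factorial)
      atTop (𝓝 (1 / Δ)) := by
  obtain ⟨ht0, htΔ⟩ := ht
  have hMcomp : Tendsto (fun l : ℕ => erlMax ωr (l - 1)) atTop (𝓝 0) :=
    (erlMax_tendsto_zero hω).comp (tendsto_sub_atTop_nat 1)
  have hglim : Tendsto (fun l : ℕ => 1/Δ - 3 * erlMax ωr (l - 1)) atTop (𝓝 (1/Δ)) := by
    have := (hMcomp.const_mul 3).const_sub (1/Δ)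
    simpa using this
  have hhlim : Tendsto (fun l : ℕ => 1/Δ + 2 * erlMax ωr (l - 1)) atTop (𝓝 (1/Δ)) := by
    have := (hMcomp.const_mul 2).const_add (1/Δ)
    simpa using this
  apply tendsto_of_tendsto_of_tendsto_of_le_of_le' hglim hhlim
  · filter_upwards [eventually_ge_atTop 2] with l hl
    obtain ⟨k, rfl⟩ : ∃ k, l = k + 1 := ⟨l - 1, by omega⟩
    have hk : 1 ≤ k := by omega
    have h := (erl_sum_bounds ωr Δ t hω hΔ ht0 htΔ hk).2.1
    rw [erl_max_eq hω k] at h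
    simp only [erl] at h
    simpa [Nat.add_sub_cancel, erlMax] using h
  · filter_upwards [eventually_ge_atTop 2] with l hl
    obtain ⟨k, rfl⟩ : ∃ k, l = k + 1 := ⟨l - 1, by omega⟩
    have hk : 1 ≤ k := by omega
    have h := (erl_sum_bounds ωr Δ t hω hΔ ht0 htΔ hk).2.2
    rw [erl_max_eq hω k] at h
    simp only [erl] at h
    simpa [Nat.add_sub_cancel, erlMax] using h
end
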